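/- Let m ≥ 3 and let p, q : Fin m → ℝ both be monotone nondecreasing with p(0) = q(0) = 0 and with all values in [0, π). If there exist a real m×m matrix A with det A = 1 and a nonzero complex number λ such that Aᵀ · diag(e^{i p(0)}, …, e^{i p(m−1)}) · A = λ · diag(e^{i q(0)}, …, e^{i q(m−1)}), then p = q. -/

import Mathlib

open scoped Matrix
open Complex

noncomputable def halfArg (z : ℂ) : ℝ := (if 0 ≤ z.arg then z.arg else z.arg + 2*Real.pi)/2

lemma halfArg_exp_sq {x : ℝ} (h0 : 0 ≤ x) (h1 : x < Real.pi) :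
    halfArg ((Complex.exp (Complex.I * x))^2) = x := by
  have pi_pos := Real.pi_pos
  have hsq : (Complex.exp (Complex.I * x))^2 = Complex.exp ((2*x : ℝ) * I) := by
    rw [← Complex.exp_nat_mul]
    push_cast
    ring_nf
  rw [hsq]
  by_cases hc : 2*x ≤ Real.pi
  · have harg : (Complex.exp ((2*x : ℝ) * I)).arg = 2*x := by
      rw [Complex.exp_mul_I]
      exact Complex.arg_cos_add_sin_mul_I ⟨by linarith, hc⟩
    rw [halfArg, harg, if_pos (by linarith)]
    ring
  · have hper : Complex.exp ((2*x : ℝ) * I) = Complex.exp ((2*x - 2*Real.pi : ℝ) * I) := by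
      rw [show ((2*x - 2*Real.pi : ℝ) : ℂ) * I = (2*x:ℝ)*I + (-1 : ℤ)*(2*(Real.pi:ℂ)*I) by push_cast; ring,
        Complex.exp_add, Complex.exp_int_mul_two_pi_mul_I, mul_one]
    have harg : (Complex.exp ((2*x : ℝ) * I)).arg = 2*x - 2*Real.pi := by
      rw [hper, Complex.exp_mul_I]
      exact Complex.arg_cos_add_sin_mul_I ⟨by linarith, by linarith⟩
    rw [halfArg, harg, if_neg (by push_neg; linarith)]
    ring

lemma mono_eq_of_multiset {m : ℕ} (p q : Fin m → ℝ) (hp : Monotone p) (hq : Monotone q)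
    (h : Multiset.map p Finset.univ.val = Multiset.map q Finset.univ.val) : p = q := by
  have huniv : (Finset.univ.val : Multiset (Fin m)) = ↑(List.finRange m) := rfl
  rw [huniv] at h
  have h' : (↑(List.ofFn p) : Multiset ℝ) = ↑(List.ofFn q) := by
    simpa [List.ofFn_eq_map, Multiset.map_coe] using h
  have hperm := Multiset.coe_eq_coe.mp h'
  have hs1 : List.Pairwise (· ≤ ·) (List.ofFn p) := by
    rw [List.pairwise_ofFn]; exact fun i j hij => hp hij.le
  have hs2 : List.Pairwise (· ≤ ·) (List.ofFn q) := by
    rw [List.pairwise_ofFn]; exact fun i j hij => hq hij.le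
  exact List.ofFn_injective (List.Perm.eq_of_pairwise' hs1 hs2 hperm)

open Polynomial in
lemma multiset_of_prod_eq {m : ℕ} (r s : Fin m → ℂ) (c d : ℂ) (hc : c ≠ 0)
    (h : ∀ z : ℂ, c * ∏ j, (z - r j) = d * ∏ j, (z - s j)) :
    Multiset.map r Finset.univ.val = Multiset.map s Finset.univ.val := by
  have hP : (C c * ∏ j, (X - C (r j))) = C d * ∏ j, (X - C (s j)) := by
    apply Polynomial.funext; intro z; simpa [Polynomial.eval_prod] using h z
  have hmon1 : (∏ j, (X - C (r j))).Monic :=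
    monic_prod_of_monic _ _ fun j _ => monic_X_sub_C _
  have hmon2 : (∏ j, (X - C (s j))).Monic :=
    monic_prod_of_monic _ _ fun j _ => monic_X_sub_C _
  have hcd : c = d := by
    have := congrArg Polynomial.leadingCoeff hP
    rwa [leadingCoeff_mul, leadingCoeff_mul, hmon1.leadingCoeff, hmon2.leadingCoeff,
      mul_one, mul_one, leadingCoeff_C, leadingCoeff_C] at this
  subst hcd
  have hPP : (∏ j, (X - C (r j))) = ∏ j, (X - C (s j)) :=
    mul_left_cancel₀ (by simpa using hc) hP
  have key : ∀ (f : Fin m → ℂ),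
      (∏ j, (X - C (f j)))
        = (Multiset.map (fun a => X - C a) (Multiset.map f Finset.univ.val)).prod := by
    intro f
    rw [Multiset.map_map, Finset.prod_eq_multiset_prod]
    rfl
  have := congrArg Polynomial.roots hPP
  rwa [key r, key s, Polynomial.roots_multiset_prod_X_sub_C,
    Polynomial.roots_multiset_prod_X_sub_C] at this

lemma trip_entry {m : ℕ} (M : Matrix (Fin m) (Fin m) ℂ) (d : Fin m → ℂ) (i k : Fin m) :
    (Mᵀ * Matrix.diagonal d * M) i k = ∑ j, d j * (M j i * M j k) := by
  rw [Matrix.mul_assoc, Matrix.mul_apply]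
  refine Finset.sum_congr rfl fun j _ => ?_
  rw [Matrix.diagonal_mul, Matrix.transpose_apply]
  ring

lemma diag_sub_smul {m : ℕ} (f g : Fin m → ℂ) (z : ℂ) :
    Matrix.diagonal f - z • Matrix.diagonal g = Matrix.diagonal (fun j => f j - z * g j) := by
  ext i k
  by_cases h : i = k
  · subst h; simp
  · simp [Matrix.diagonal_apply_ne _ h]

lemma exp_sq_re_im (x a : ℝ) :
    (Complex.exp (Complex.I * x) * ((a:ℂ) * a)).re = Real.cos x * a^2 ∧
    (Complex.exp (Complex.I * x) * ((a:ℂ) * a)).im = Real.sin x * a^2 := by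
  have h : (Complex.exp (Complex.I * x) * ((a:ℂ) * a)) =
      Complex.ofReal (Real.cos x * a^2) + Complex.ofReal (Real.sin x * a^2) * Complex.I := by
    rw [mul_comm Complex.I, Complex.exp_mul_I]
    push_cast
    ring
  rw [h]; constructor <;> simp [Complex.cos_ofReal_re, Complex.sin_ofReal_re, ← Complex.ofReal_pow]

theorem normal_form_unique (m : ℕ) (hm : 3 ≤ m) (p q : Fin m → ℝ)
    (hpmono : Monotone p) (hqmono : Monotone q)
    (hp0 : p ⟨0, by omega⟩ = 0) (hq0 : q ⟨0, by omega⟩ = 0)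
    (hpbd : ∀ j, 0 ≤ p j ∧ p j < Real.pi) (hqbd : ∀ j, 0 ≤ q j ∧ q j < Real.pi)
    (A : Matrix (Fin m) (Fin m) ℝ) (hA : A.det = 1) (lam : ℂ) (hlam : lam ≠ 0)
    (heq : (A.map (fun a => (a : ℂ)))ᵀ *
        Matrix.diagonal (fun j => Complex.exp (Complex.I * (p j : ℂ))) *
        (A.map (fun a => (a : ℂ)))
      = lam • Matrix.diagonal (fun j => Complex.exp (Complex.I * (q j : ℂ)))) :
    p = q := by
  have hm0 : 0 < m := by omega
  set i0 : Fin m := ⟨0, by omega⟩ with hi0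
  have hp0' : p i0 = 0 := hp0
  have hq0' : q i0 = 0 := hq0
  set M : Matrix (Fin m) (Fin m) ℂ := A.map (fun a => (a:ℂ)) with hM
  set Dp : Matrix (Fin m) (Fin m) ℂ :=
    Matrix.diagonal (fun j => Complex.exp (Complex.I * (p j : ℂ))) with hDp
  set Dq : Matrix (Fin m) (Fin m) ℂ :=
    Matrix.diagonal (fun j => Complex.exp (Complex.I * (q j : ℂ))) with hDq
  -- determinant of M
  have hdetM : M.det = 1 := by
    have h := RingHom.map_det Complex.ofRealHom A
    rw [RingHom.mapMatrix_apply, hA] at h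
    rw [hM, show (fun a : ℝ => (a:ℂ)) = ⇑Complex.ofRealHom from rfl, ← h]
    simp
  -- λ as diagonal (0,0) entry
  have h00 := congrFun (congrFun heq i0) i0
  rw [hDp, hDq] at h00
  rw [trip_entry] at h00
  have hrhs : (lam • Matrix.diagonal fun j => Complex.exp (Complex.I * (q j : ℂ))) i0 i0
      = lam := by
    rw [Matrix.smul_apply, Matrix.diagonal_apply_eq, hq0']
    simp
  rw [hrhs] at h00
  -- h00 : ∑ j, exp (I p j) * (M j i0 * M j i0) = lam
  have hMent : ∀ j k, M j k = ((A j k : ℝ) : ℂ) := fun j k => rfl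
  have hlam_im : lam.im = ∑ j, Real.sin (p j) * (A j i0)^2 := by
    rw [← h00, Complex.im_sum]
    refine Finset.sum_congr rfl fun j _ => ?_
    rw [hMent j i0]
    exact (exp_sq_re_im (p j) (A j i0)).2
  have hlam_re : lam.re = ∑ j, Real.cos (p j) * (A j i0)^2 := by
    rw [← h00, Complex.re_sum]
    refine Finset.sum_congr rfl fun j _ => ?_
    rw [hMent j i0]
    exact (exp_sq_re_im (p j) (A j i0)).1
  have hlam_im_nonneg : 0 ≤ lam.im := by
    rw [hlam_im]
    refine Finset.sum_nonneg fun j _ => ?_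
    exact mul_nonneg (Real.sin_nonneg_of_nonneg_of_le_pi (hpbd j).1 (hpbd j).2.le) (sq_nonneg _)
  -- inverse matrix
  have hIA : IsUnit A.det := by rw [hA]; exact isUnit_one
  have hAB : A * A⁻¹ = 1 := Matrix.mul_nonsing_inv A hIA
  set N : Matrix (Fin m) (Fin m) ℂ := (A⁻¹).map (fun a => (a:ℂ)) with hN
  have hMN : M * N = 1 := by
    have h : (A * A⁻¹).map ⇑Complex.ofRealHom = M * N := Matrix.map_mul
    rw [hAB] at h
    rw [← h]
    exact Matrix.map_one _ (map_zero _) (map_one _)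
  have hsand : Dp = lam • (Nᵀ * Dq * N) := by
    have h1 : Nᵀ * (Mᵀ * Dp * M) * N = Nᵀ * (lam • Dq) * N := by rw [heq]
    calc Dp = (M*N)ᵀ * Dp * (M*N) := by rw [hMN]; simp
      _ = Nᵀ * (Mᵀ * Dp * M) * N := by rw [Matrix.transpose_mul]; simp only [Matrix.mul_assoc]
      _ = Nᵀ * (lam • Dq) * N := h1
      _ = lam • (Nᵀ * Dq * N) := by rw [Matrix.mul_smul, Matrix.smul_mul]
  have h00' := congrFun (congrFun hsand i0) i0
  rw [hDp, hDq] at h00'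
  rw [Matrix.diagonal_apply_eq, hp0'] at h00'
  rw [Matrix.smul_apply, trip_entry] at h00'
  simp only [Complex.ofReal_zero, mul_zero, Complex.exp_zero] at h00'
  -- h00' : 1 = lam * ∑ j, exp (I q j) * (N j i0 * N j i0)
  set w : ℂ := ∑ j, Complex.exp (Complex.I * (q j : ℂ)) * (N j i0 * N j i0) with hw
  have hw_inv : w = lam⁻¹ := eq_inv_of_mul_eq_one_right h00'.symm
  have hw_im_nonneg : 0 ≤ w.im := by
    rw [hw, Complex.im_sum]
    refine Finset.sum_nonneg fun j _ => ?_
    rw [show N j i0 = (((A⁻¹) j i0 : ℝ) : ℂ) from rfl]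
    rw [(exp_sq_re_im (q j) ((A⁻¹) j i0)).2]
    exact mul_nonneg
      (Real.sin_nonneg_of_nonneg_of_le_pi (hqbd j).1 (hqbd j).2.le) (sq_nonneg _)
  have him0 : lam.im = 0 := by
    have h1 : w.im = -lam.im / Complex.normSq lam := by rw [hw_inv, Complex.inv_im]
    have h2 : 0 < Complex.normSq lam := Complex.normSq_pos.mpr hlam
    rw [h1] at hw_im_nonneg
    rcases div_nonneg_iff.mp hw_im_nonneg with ⟨h3, _⟩ | ⟨_, h4⟩
    · linarith
    · linarith
  -- each term of the im-sum vanishes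
  have hterm : ∀ j ∈ Finset.univ, Real.sin (p j) * (A j i0)^2 = 0 := by
    rw [← Finset.sum_eq_zero_iff_of_nonneg]
    · rw [← hlam_im]; exact him0
    · exact fun j _ => mul_nonneg
        (Real.sin_nonneg_of_nonneg_of_le_pi (hpbd j).1 (hpbd j).2.le) (sq_nonneg _)
  have hre_sum : lam.re = ∑ j, (A j i0)^2 := by
    rw [hlam_re]
    refine Finset.sum_congr rfl fun j _ => ?_
    by_cases hz : A j i0 = 0
    · simp [hz]
    · have hs : Real.sin (p j) = 0 := by
        have := hterm j (Finset.mem_univ j)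
        have : Real.sin (p j) * (A j i0)^2 = 0 := this
        rcases mul_eq_zero.mp this with h | h
        · exact h
        · exact absurd (pow_eq_zero_iff (n := 2) (by norm_num) |>.mp h) hz
      have hpj : p j = 0 := by
        have hb := hpbd j
        have := Real.sin_eq_zero_iff_of_lt_of_lt
          (by linarith [Real.pi_pos, hb.1] : -Real.pi < p j) hb.2
        exact this.mp hs
      rw [hpj, Real.cos_zero, one_mul]
  have hre_pos : 0 < lam.re := by
    have hnn : 0 ≤ lam.re := by
      rw [hre_sum]; exact Finset.sum_nonneg fun j _ => sq_nonneg _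
    rcases hnn.lt_or_eq with h | h
    · exact h
    · exfalso
      exact hlam (Complex.ext h.symm him0)
  -- |λ| = 1 via determinants
  have hdets := congrArg Matrix.det heq
  rw [Matrix.det_mul, Matrix.det_mul, Matrix.det_transpose, hdetM, one_mul, mul_one,
    Matrix.det_smul, Fintype.card_fin] at hdets
  rw [hDp, hDq, Matrix.det_diagonal, Matrix.det_diagonal] at hdets
  have habs_diag : ∀ (f : Fin m → ℝ),
      ‖∏ j, Complex.exp (Complex.I * (f j : ℂ))‖ = 1 := by
    intro f
    rw [norm_prod]
    refine Finset.prod_eq_one fun j _ => ?_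
    rw [Complex.norm_exp]
    simp
  have habs := congrArg (‖·‖) hdets
  rw [habs_diag, norm_mul, norm_pow, habs_diag, mul_one] at habs
  have hlam_eq_re : lam = ((lam.re : ℝ) : ℂ) := Complex.ext rfl (by simp [him0])
  have habs_lam : ‖lam‖ = lam.re := by
    rw [hlam_eq_re]
    simp [abs_of_pos hre_pos]
  rw [habs_lam] at habs
  have hre1 : lam.re = 1 := by
    by_contra hne
    rcases lt_or_gt_of_ne hne with h | h
    · have := pow_lt_one₀ hre_pos.le h (by omega : m ≠ 0)
      rw [habs.symm] at this
      exact lt_irrefl _ this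
    · have := one_lt_pow₀ h (by omega : m ≠ 0)
      rw [habs.symm] at this
      exact lt_irrefl _ this
  have hlam1 : lam = 1 := by
    rw [hlam_eq_re, hre1]; simp
  rw [hlam1, one_smul] at heq
  -- conjugation
  have hMc : M.map ⇑(starRingEnd ℂ) = M := by
    ext i j
    simp [hM, Matrix.map_apply, Complex.conj_ofReal]
  have hexpc : ∀ x : ℝ, (starRingEnd ℂ) (Complex.exp (Complex.I * (x:ℂ)))
      = Complex.exp (-(Complex.I * (x:ℂ))) := by
    intro x
    rw [← Complex.exp_conj]
    congr 1
    simp [map_mul, Complex.conj_I, Complex.conj_ofReal, neg_mul]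
  have hDpc : Dp.map ⇑(starRingEnd ℂ)
      = Matrix.diagonal (fun j => Complex.exp (-(Complex.I * (p j : ℂ)))) := by
    rw [hDp, Matrix.diagonal_map (map_zero _)]
    exact congrArg Matrix.diagonal (funext fun j => hexpc (p j))
  have hDqc : Dq.map ⇑(starRingEnd ℂ)
      = Matrix.diagonal (fun j => Complex.exp (-(Complex.I * (q j : ℂ)))) := by
    rw [hDq, Matrix.diagonal_map (map_zero _)]
    exact congrArg Matrix.diagonal (funext fun j => hexpc (q j))
  have heqc : Mᵀ * Matrix.diagonal (fun j => Complex.exp (-(Complex.I * (p j:ℂ)))) * M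
      = Matrix.diagonal (fun j => Complex.exp (-(Complex.I * (q j:ℂ)))) := by
    have h := congrArg (fun X : Matrix (Fin m) (Fin m) ℂ => X.map ⇑(starRingEnd ℂ)) heq
    rw [Matrix.map_mul, Matrix.map_mul, Matrix.transpose_map, hMc, hDpc, hDqc] at h
    exact h
  -- pencil determinant identity
  have hsame : ∀ z : ℂ,
      (∏ j, (Complex.exp (Complex.I * (p j:ℂ)) - z * Complex.exp (-(Complex.I * (p j:ℂ)))))
      = ∏ j, (Complex.exp (Complex.I * (q j:ℂ)) - z * Complex.exp (-(Complex.I * (q j:ℂ)))) := by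
    intro z
    have hmat : Mᵀ * (Dp - z • Matrix.diagonal (fun j => Complex.exp (-(Complex.I * (p j:ℂ))))) * M
        = Dq - z • Matrix.diagonal (fun j => Complex.exp (-(Complex.I * (q j:ℂ)))) := by
      rw [Matrix.mul_sub, Matrix.sub_mul, Matrix.mul_smul, Matrix.smul_mul, heq, heqc]
    have hd := congrArg Matrix.det hmat
    rw [Matrix.det_mul, Matrix.det_mul, Matrix.det_transpose, hdetM, one_mul, mul_one] at hd
    rw [hDp, hDq, diag_sub_smul, diag_sub_smul, Matrix.det_diagonal, Matrix.det_diagonal] at hd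
    exact hd
  -- factor and compare multisets
  have hfac : ∀ (x z : ℂ), Complex.exp x - z * Complex.exp (-x)
      = (-Complex.exp (-x)) * (z - (Complex.exp x)^2) := by
    intro x z
    rw [Complex.exp_neg]
    have hne := Complex.exp_ne_zero x
    field_simp
    ring
  have hprod : ∀ z : ℂ,
      (∏ j, (-Complex.exp (-(Complex.I * (p j:ℂ))))) * ∏ j, (z - (Complex.exp (Complex.I * (p j:ℂ)))^2)
      = (∏ j, (-Complex.exp (-(Complex.I * (q j:ℂ))))) * ∏ j, (z - (Complex.exp (Complex.I * (q j:ℂ)))^2) := by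
    intro z
    rw [← Finset.prod_mul_distrib, ← Finset.prod_mul_distrib]
    simp only [← hfac]
    exact hsame z
  have hC : (∏ j, (-Complex.exp (-(Complex.I * (p j:ℂ))))) ≠ 0 := by
    refine Finset.prod_ne_zero_iff.mpr fun j _ => ?_
    exact neg_ne_zero.mpr (Complex.exp_ne_zero _)
  have hms := multiset_of_prod_eq
    (fun j => (Complex.exp (Complex.I * (p j:ℂ)))^2)
    (fun j => (Complex.exp (Complex.I * (q j:ℂ)))^2) _ _ hC hprod
  -- recover p and q
  have h1 : Multiset.map p Finset.univ.val
      = Multiset.map halfArg (Multiset.map (fun j => (Complex.exp (Complex.I * (p j:ℂ)))^2) Finset.univ.val) := by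
    rw [Multiset.map_map]
    exact Multiset.map_congr rfl fun j _ => (halfArg_exp_sq (hpbd j).1 (hpbd j).2).symm
  have h2 : Multiset.map q Finset.univ.val
      = Multiset.map halfArg (Multiset.map (fun j => (Complex.exp (Complex.I * (q j:ℂ)))^2) Finset.univ.val) := by
    rw [Multiset.map_map]
    exact Multiset.map_congr rfl fun j _ => (halfArg_exp_sq (hqbd j).1 (hqbd j).2).symm
  apply mono_eq_of_multiset p q hpmono hqmono
  rw [h1, h2, hms]
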